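/- Every open subspace U of an Ascoli Tychonoff space X is an Ascoli space (with the subspace topology). -/

import Mathlib

open Set Filter Topology

/-- A set `H` of continuous real-valued functions is equicontinuous. -/
def EquicontinuousSet {X : Type*} [TopologicalSpace X] (H : Set C(X, ℝ)) : Prop :=
  ∀ x : X, ∀ ε : ℝ, 0 < ε → ∃ U ∈ 𝓝 x, ∀ x' ∈ U, ∀ f ∈ H, |f x' - f x| < ε

/-- `X` is Ascoli: every compact subset of `C_k(X)` is equicontinuous. -/
def AscoliSpace (X : Type*) [TopologicalSpace X] : Prop :=
  ∀ K : Set C(X, ℝ), IsCompact K → EquicontinuousSet K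

/-- `X` is sequentially Ascoli: every convergent sequence in `C_k(X)` is equicontinuous. -/
def SeqAscoliSpace (X : Type*) [TopologicalSpace X] : Prop :=
  ∀ (f : ℕ → C(X, ℝ)) (g : C(X, ℝ)), Tendsto f atTop (𝓝 g) →
    EquicontinuousSet (Set.range f ∪ {g})

/-- A function is `k`-continuous if its restriction to every compact subset is continuous. -/
def KContinuous {X Y : Type*} [TopologicalSpace X] [TopologicalSpace Y] (f : X → Y) : Prop :=
  ∀ K : Set X, IsCompact K → ContinuousOn f K

/-- `X` is a `k_ℝ`-space if every `k`-continuous real-valued function is continuous. -/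
def KRSpace (X : Type*) [TopologicalSpace X] : Prop :=
  ∀ f : X → ℝ, KContinuous f → Continuous f

/-- `X` is an `s_ℝ`-space if every sequentially continuous real-valued function is continuous. -/
def SRSpace (X : Type*) [TopologicalSpace X] : Prop :=
  ∀ f : X → ℝ, SeqContinuous f → Continuous f

/-- A function on a product is separately continuous. -/
def SeparatelyContinuous {X K : Type*} [TopologicalSpace X] [TopologicalSpace K]
    (Φ : X × K → ℝ) : Prop :=
  (∀ x : X, Continuous fun k => Φ (x, k)) ∧ (∀ k : K, Continuous fun x => Φ (x, k))

/-- `X` is pseudocompact: every continuous real-valued function on `X` is bounded. -/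
def Pseudocompact (X : Type*) [TopologicalSpace X] : Prop :=
  ∀ f : X → ℝ, Continuous f → ∃ M : ℝ, ∀ x : X, |f x| ≤ M

/-- A subset `A` of `X` is functionally bounded if every continuous real-valued
function on `X` is bounded on `A`. -/
def FunctionallyBounded {X : Type*} [TopologicalSpace X] (A : Set X) : Prop :=
  ∀ f : X → ℝ, Continuous f → ∃ M : ℝ, ∀ a ∈ A, |f a| ≤ M

/-- An `R`-quotient map: a continuous surjection such that real-valued functions on the
codomain are continuous as soon as their composition with the map is continuous. -/
def RQuotientMap {X Y : Type*} [TopologicalSpace X] [TopologicalSpace Y] (p : X → Y) : Prop :=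
  Continuous p ∧ Function.Surjective p ∧ ∀ φ : Y → ℝ, Continuous (φ ∘ p) → Continuous φ


/-- Clamping to `[-M, M]` is `1`-Lipschitz. -/
private lemma clamp_lipschitz (M a b : ℝ) :
    |max (-M) (min M a) - max (-M) (min M b)| ≤ |a - b| := by
  calc |max (-M) (min M a) - max (-M) (min M b)|
      = |max (min M a) (-M) - max (min M b) (-M)| := by
        rw [max_comm (-M) (min M a), max_comm (-M) (min M b)]
    _ ≤ |min M a - min M b| := abs_max_sub_max_le_abs _ _ _
    _ ≤ max |M - M| |a - b| := abs_min_sub_min_le_max _ _ _ _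
    _ = |a - b| := by simp

private lemma clamp_abs_le (M t : ℝ) (hM : 0 ≤ M) : |max (-M) (min M t)| ≤ M := by
  rw [abs_le]
  constructor
  · exact le_max_left _ _
  · exact max_le (by linarith) (min_le_left _ _)

private lemma clamp_eq_self (M t : ℝ) (ht : |t| ≤ M) : max (-M) (min M t) = t := by
  rw [abs_le] at ht
  rw [min_eq_right ht.2, max_eq_right ht.1]

private lemma clamp_abs_eq (M t : ℝ) (hM : 0 ≤ M) (ht : M < |t|) :
    |max (-M) (min M t)| = M := by
  rcases lt_abs.mp ht with h | h
  · rw [min_eq_left h.le, max_eq_right (by linarith), abs_of_nonneg hM]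
  · rw [min_eq_right (by linarith), max_eq_left (by linarith), abs_neg, abs_of_nonneg hM]

theorem ascoli_of_isOpen_subspace {X : Type*} [TopologicalSpace X] [T35Space X]
    (hX : AscoliSpace X) (U : Set X) (hU : IsOpen U) : AscoliSpace ↥U := by
  classical
  intro K hK
  rcases K.eq_empty_or_nonempty with rfl | hKne
  · intro x ε hε
    exact ⟨Set.univ, Filter.univ_mem, by simp⟩
  intro x ε hε
  -- Step 1: a bump function `ψ` equal to `1` near `x` and `0` outside `U`.
  obtain ⟨f0, hf0c, hf0x, hf0K⟩ := CompletelyRegularSpace.completely_regular (X := X) (↑x) Uᶜ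
    hU.isClosed_compl (by simp [x.2])
  set φ : X → ℝ := fun y => (f0 y : ℝ) with hφdef
  have hφc : Continuous φ := continuous_subtype_val.comp hf0c
  have hφ01 : ∀ y, 0 ≤ φ y ∧ φ y ≤ 1 := fun y => ⟨(f0 y).2.1, (f0 y).2.2⟩
  have hφx : φ ↑x = 0 := by simp [hφdef, hf0x]
  have hφ1 : ∀ y ∉ U, φ y = 1 := by
    intro y hy
    simp [hφdef, hf0K (by simpa using hy)]
  set ψ : X → ℝ := fun y => min 1 (2 * (1 - φ y)) with hψdef
  have hψc : Continuous ψ :=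
    continuous_const.min (continuous_const.mul (continuous_const.sub hφc))
  have hψx : ψ ↑x = 1 := by norm_num [hψdef, hφx]
  have hψ0 : ∀ y ∉ U, ψ y = 0 := by
    intro y hy
    norm_num [hψdef, hφ1 y hy]
  have hψ01 : ∀ y, 0 ≤ ψ y ∧ ψ y ≤ 1 := by
    intro y
    refine ⟨le_min (by norm_num) (by have := (hφ01 y).2; linarith), min_le_left _ _⟩
  set V : Set X := {y | φ y < 1 / 2} with hVdef
  have hVopen : IsOpen V := isOpen_lt hφc continuous_const
  have hxV : (↑x : X) ∈ V := by simp [hVdef, hφx]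
  have hψV : ∀ y ∈ V, ψ y = 1 := by
    intro y hy
    have : φ y < 1 / 2 := hy
    exact min_eq_left (by linarith)
  -- Step 2: a pointwise bound at `x` on `K`.
  obtain ⟨g0, hg0K, hg0max⟩ := hK.exists_isMaxOn hKne
    ((continuous_eval_const x).abs.continuousOn)
  rw [isMaxOn_iff] at hg0max
  set C : ℝ := |g0 x| with hCdef
  have hC0 : 0 ≤ C := abs_nonneg _
  have hC : ∀ f ∈ K, |f x| ≤ C := hg0max
  set M : ℝ := C + 2 with hMdef
  have hM0 : 0 ≤ M := by linarith
  set clamp : ℝ → ℝ := fun t => max (-M) (min M t) with hclampdef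
  have hclampc : Continuous clamp := continuous_const.max (continuous_const.min continuous_id)
  -- Step 3: the map `T : C(U, ℝ) → C(X, ℝ)`, multiplication by `ψ` after clamping.
  set Tf : C(↥U, ℝ) → X → ℝ :=
    fun f y => ψ y * clamp (if h : y ∈ U then f ⟨y, h⟩ else 0) with hTfdef
  have hTfU : ∀ (f : C(↥U, ℝ)) (u : ↥U), Tf f ↑u = ψ ↑u * clamp (f u) := by
    intro f u
    simp [hTfdef, dif_pos u.2]
  have hTfc : ∀ f : C(↥U, ℝ), Continuous (Tf f) := by
    intro f
    rw [continuous_iff_continuousAt]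
    intro y
    by_cases hy : y ∈ U
    · have hco : ContinuousOn (Tf f) U := by
        rw [continuousOn_iff_continuous_restrict]
        have : U.restrict (Tf f) = fun (u : ↥U) => ψ ↑u * clamp (f u) := funext fun u => hTfU f u
        change Continuous (U.restrict (Tf f)); rw [this]
        exact (hψc.comp continuous_subtype_val).mul (hclampc.comp f.continuous)
      exact hco.continuousAt (hU.mem_nhds hy)
    · have h0 : Tf f y = 0 := by simp [hTfdef, hψ0 y hy]
      rw [ContinuousAt, h0]
      apply squeeze_zero_norm (a := fun z => M * ψ z)
      · intro z
        have h1 : ‖Tf f z‖ = |ψ z| * |clamp (if h : z ∈ U then f ⟨z, h⟩ else 0)| := by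
          rw [Real.norm_eq_abs, hTfdef, abs_mul]
        rw [h1, abs_of_nonneg (hψ01 z).1]
        calc ψ z * |clamp (if h : z ∈ U then f ⟨z, h⟩ else 0)|
            ≤ ψ z * M := mul_le_mul_of_nonneg_left (clamp_abs_le M _ hM0) (hψ01 z).1
          _ = M * ψ z := mul_comm _ _
      · have : Tendsto (fun z => M * ψ z) (𝓝 y) (𝓝 (M * ψ y)) := (continuous_const.mul hψc).tendsto y
        simpa only [hψ0 y hy, mul_zero] using this
  set T : C(↥U, ℝ) → C(X, ℝ) := fun f => ⟨Tf f, hTfc f⟩ with hTdef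
  -- Step 4: `T` is continuous for the compact-open topologies.
  have hTcont : Continuous T := by
    rw [continuous_iff_continuousAt]
    intro g
    rw [ContinuousAt, ContinuousMap.tendsto_iff_forall_isCompact_tendstoUniformlyOn]
    intro Q hQ
    rw [Metric.tendstoUniformlyOn_iff]
    intro δ hδ
    have hM2 : (0:ℝ) < 2 * M := by linarith
    set c : ℝ := δ / (2 * (2 * M)) with hcdef
    have hc0 : 0 < c := by positivity
    set Q' : Set X := Q ∩ ψ ⁻¹' Set.Ici c with hQ'def
    have hQ'c : IsCompact Q' := hQ.inter_right (isClosed_Ici.preimage hψc)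
    have hQ'U : Q' ⊆ U := by
      intro y hy
      by_contra hyU
      have h1 : c ≤ ψ y := hy.2
      rw [hψ0 y hyU] at h1
      linarith
    set Q'' : Set ↥U := Subtype.val ⁻¹' Q' with hQ''def
    have hQ''c : IsCompact Q'' := by
      rw [Subtype.isCompact_iff]
      have himg : (Subtype.val : ↥U → X) '' Q'' = Q' := by
        rw [hQ''def, Subtype.image_preimage_coe, Set.inter_eq_right]
        exact hQ'U
      rwa [himg]
    have hid : Filter.Tendsto (id : C(↥U, ℝ) → C(↥U, ℝ)) (𝓝 g) (𝓝 g) := Filter.tendsto_id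
    rw [ContinuousMap.tendsto_iff_forall_isCompact_tendstoUniformlyOn] at hid
    have huc := (Metric.tendstoUniformlyOn_iff.mp (hid Q'' hQ''c)) (δ / 2) (by linarith)
    filter_upwards [huc] with f hf
    intro y hyQ
    rw [Real.dist_eq]
    have habs : |Tf g y - Tf f y|
        = |ψ y| * |clamp (if h : y ∈ U then g ⟨y, h⟩ else 0)
            - clamp (if h : y ∈ U then f ⟨y, h⟩ else 0)| := by
      rw [hTfdef]
      rw [← abs_mul, mul_sub]
    by_cases hy' : y ∈ Q'
    · have hyU : y ∈ U := hQ'U hy'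
      have hu : (⟨y, hyU⟩ : ↥U) ∈ Q'' := hy'
      have hfy := hf ⟨y, hyU⟩ hu
      rw [Real.dist_eq] at hfy
      show |Tf g y - Tf f y| < δ
      rw [habs, dif_pos hyU, dif_pos hyU]
      calc |ψ y| * |clamp (g ⟨y, hyU⟩) - clamp (f ⟨y, hyU⟩)|
          ≤ 1 * |g ⟨y, hyU⟩ - f ⟨y, hyU⟩| := by
            apply mul_le_mul
            · rw [abs_of_nonneg (hψ01 y).1]; exact (hψ01 y).2
            · exact clamp_lipschitz M _ _
            · exact abs_nonneg _
            · norm_num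
        _ = |g ⟨y, hyU⟩ - f ⟨y, hyU⟩| := one_mul _
        _ < δ / 2 := hfy
        _ < δ := by linarith
    · have hψy : ψ y < c := by
        by_contra hcon
        exact hy' ⟨hyQ, not_lt.mp hcon⟩
      show |Tf g y - Tf f y| < δ
      rw [habs]
      calc |ψ y| * |clamp (if h : y ∈ U then g ⟨y, h⟩ else 0)
              - clamp (if h : y ∈ U then f ⟨y, h⟩ else 0)|
          ≤ ψ y * (2 * M) := by
            rw [abs_of_nonneg (hψ01 y).1]
            apply mul_le_mul_of_nonneg_left _ (hψ01 y).1
            calc |clamp (if h : y ∈ U then g ⟨y, h⟩ else 0)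
                  - clamp (if h : y ∈ U then f ⟨y, h⟩ else 0)|
                ≤ |clamp (if h : y ∈ U then g ⟨y, h⟩ else 0)|
                  + |clamp (if h : y ∈ U then f ⟨y, h⟩ else 0)| := abs_sub _ _
              _ ≤ M + M := add_le_add (clamp_abs_le M _ hM0) (clamp_abs_le M _ hM0)
              _ = 2 * M := by ring
        _ < c * (2 * M) := mul_lt_mul_of_pos_right hψy hM2
        _ = δ / 2 := by
            rw [hcdef, div_mul_eq_mul_div, mul_div_mul_right _ _ hM2.ne']
        _ < δ := by linarith
  -- Step 5: apply the Ascoli property of `X` to the compact set `T '' K`.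
  have hTK : IsCompact (T '' K) := hK.image hTcont
  set ε' : ℝ := min ε 1 with hε'def
  have hε'0 : 0 < ε' := lt_min hε one_pos
  have hε'ε : ε' ≤ ε := min_le_left _ _
  have hε'1 : ε' ≤ 1 := min_le_right _ _
  obtain ⟨W, hWnhds, hW⟩ := hX (T '' K) hTK ↑x ε' hε'0
  refine ⟨Subtype.val ⁻¹' (W ∩ V), ?_, ?_⟩
  · exact continuous_subtype_val.continuousAt.preimage_mem_nhds
      (Filter.inter_mem hWnhds (hVopen.mem_nhds hxV))
  · intro x' hx' f hfK
    have h1 := hW ↑x' hx'.1 (T f) ⟨f, hfK, rfl⟩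
    have hTx : T f ↑x = f x := by
      show Tf f ↑x = f x
      rw [hTfU f x, hψx, one_mul]
      exact clamp_eq_self M _ (le_trans (hC f hfK) (by linarith))
    have hTx' : T f ↑x' = clamp (f x') := by
      show Tf f ↑x' = clamp (f x')
      rw [hTfU f x', hψV ↑x' hx'.2, one_mul]
    rw [hTx, hTx'] at h1
    simp only [hclampdef] at h1
    rcases le_or_gt (|f x'|) M with hle | hgt
    · rw [clamp_eq_self M _ hle] at h1
      exact lt_of_lt_of_le h1 hε'ε
    · exfalso
      have h2 : |clamp (f x')| = M := clamp_abs_eq M _ hM0 hgt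
      have h3 : |clamp (f x')| - |f x| ≤ |clamp (f x') - f x| := abs_sub_abs_le_abs_sub _ _
      have h4 : |f x| ≤ C := hC f hfK
      have h5 : M - C < ε' := by
        calc M - C ≤ |clamp (f x')| - |f x| := by rw [h2]; linarith
          _ ≤ |clamp (f x') - f x| := h3
          _ < ε' := h1
      rw [hMdef] at h5
      linarith
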